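/- For every k ∈ ℝ, (1/(2π)) ∫_{-∞}^∞ e^{-k(iu - 1/2)} / (u² + 1/4) du = e^{min(k,0)}. -/

import Mathlib

open MeasureTheory Complex Set Filter
open scoped Real Topology FourierTransform RealInnerProductSpace

namespace LewisLipton

lemma integrableOn_cexp_Ioi {c : ℂ} (hc : c.re < 0) :
    IntegrableOn (fun t : ℝ => Complex.exp (c * t)) (Ioi (0:ℝ)) := by
  refine (exp_neg_integrableOn_Ioi 0 (neg_pos.mpr hc)).mono' ?_ ?_
  · exact (Complex.continuous_exp.comp (continuous_const.mul Complex.continuous_ofReal)).aestronglyMeasurable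
  · filter_upwards with t
    simp [Complex.norm_exp, neg_mul, Complex.mul_re]

lemma integral_cexp_Ioi {c : ℂ} (hc : c.re < 0) :
    ∫ t in Ioi (0:ℝ), Complex.exp (c * t) = -c⁻¹ := by
  have hc0 : c ≠ 0 := fun h => by simp [h] at hc
  have hderiv : ∀ x ∈ Ici (0:ℝ), HasDerivAt (fun t : ℝ => c⁻¹ * Complex.exp (c * t))
      (Complex.exp (c * x)) x := by
    intro x _
    have h1 : HasDerivAt (fun t : ℝ => c * (t:ℂ)) c x := by
      simpa using (Complex.ofRealCLM.hasDerivAt (x := x)).const_mul c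
    have h2 := (h1.cexp).const_mul c⁻¹
    have : c⁻¹ * (cexp (c * ↑x) * c) = cexp (c * x) := by
      field_simp
    simpa [this] using h2
  have htend : Tendsto (fun t : ℝ => c⁻¹ * Complex.exp (c * t)) atTop (𝓝 0) := by
    rw [tendsto_zero_iff_norm_tendsto_zero]
    have : (fun t : ℝ => ‖c⁻¹ * Complex.exp (c * t)‖) = fun t : ℝ => ‖c⁻¹‖ * Real.exp (c.re * t) := by
      ext t; simp [Complex.norm_exp, Complex.mul_re]
    rw [this]
    simpa using (Real.tendsto_exp_atBot.comp
      (tendsto_id.const_mul_atTop_of_neg hc)).const_mul ‖c⁻¹‖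
  have := integral_Ioi_of_hasDerivAt_of_tendsto' hderiv (integrableOn_cexp_Ioi hc) htend
  simpa using this

lemma restrict_Iic_eq_map_neg :
    (volume : Measure ℝ).restrict (Iic (0:ℝ))
      = Measure.map (fun x : ℝ => -x) (volume.restrict (Ici (0:ℝ))) := by
  have A : MeasurableEmbedding fun x : ℝ => -x :=
    (Homeomorph.neg ℝ).isClosedEmbedding.measurableEmbedding
  have : Ici (0:ℝ) = (fun x : ℝ => -x) ⁻¹' (Iic (0:ℝ)) := by
    ext x; simp
  rw [this, ← A.restrict_map, Measure.map_neg_eq_self volume]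

lemma integrableOn_cexp_Iic {c : ℂ} (hc : 0 < c.re) :
    IntegrableOn (fun t : ℝ => Complex.exp (c * t)) (Iic (0:ℝ)) := by
  have A : MeasurableEmbedding fun x : ℝ => -x :=
    (Homeomorph.neg ℝ).isClosedEmbedding.measurableEmbedding
  rw [IntegrableOn, restrict_Iic_eq_map_neg, A.integrable_map_iff]
  have h := (integrableOn_cexp_Ioi (c := -c) (by simpa using hc))
  rw [← integrableOn_Ici_iff_integrableOn_Ioi] at h
  refine h.congr_fun ?_ measurableSet_Ici
  intro t _; simp only [Function.comp]; push_cast; ring_nf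

lemma integral_cexp_Iic {c : ℂ} (hc : 0 < c.re) :
    ∫ t in Iic (0:ℝ), Complex.exp (c * t) = c⁻¹ := by
  have h := integral_comp_neg_Iic (c := (0:ℝ)) (fun t : ℝ => Complex.exp (-c * t))
  simp only [neg_zero] at h
  have h2 : (∫ t in Iic (0:ℝ), Complex.exp (c * t)) = ∫ t in Ioi (0:ℝ), Complex.exp (-c * t) := by
    rw [← h]; congr 1; ext t; push_cast; ring_nf
  rw [h2, integral_cexp_Ioi (by simpa using hc)]
  rw [neg_inv, neg_neg]

noncomputable def f : ℝ → ℂ := fun t => (Real.exp (-|t|/2) : ℂ)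

lemma eq_Iic (r : ℝ) : EqOn (fun t : ℝ => Complex.exp ((r*t : ℝ) * I) * f t)
    (fun t : ℝ => Complex.exp ((1/2 + r * I) * t)) (Iic (0:ℝ)) := by
  intro t ht
  simp only [f, Complex.ofReal_exp]
  rw [← Complex.exp_add]
  congr 1
  rw [abs_of_nonpos (mem_Iic.mp ht)]
  push_cast; ring

lemma eq_Ioi (r : ℝ) : EqOn (fun t : ℝ => Complex.exp ((r*t : ℝ) * I) * f t)
    (fun t : ℝ => Complex.exp ((-(1/2) + r * I) * t)) (Ioi (0:ℝ)) := by
  intro t ht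
  simp only [f, Complex.ofReal_exp]
  rw [← Complex.exp_add]
  congr 1
  rw [_root_.abs_of_nonneg (le_of_lt (mem_Ioi.mp ht))]
  push_cast; ring

lemma int_Iic (r : ℝ) : IntegrableOn (fun t : ℝ => Complex.exp ((r*t : ℝ) * I) * f t) (Iic (0:ℝ)) :=
  (integrableOn_cexp_Iic (c := 1/2 + r * I) (by simp)).congr_fun (eq_Iic r).symm measurableSet_Iic

lemma int_Ioi (r : ℝ) : IntegrableOn (fun t : ℝ => Complex.exp ((r*t : ℝ) * I) * f t) (Ioi (0:ℝ)) :=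
  (integrableOn_cexp_Ioi (c := -(1/2) + r * I) (by norm_num)).congr_fun (eq_Ioi r).symm measurableSet_Ioi

lemma int_f (r : ℝ) : Integrable (fun t : ℝ => Complex.exp ((r*t : ℝ) * I) * f t) := by
  rw [← integrableOn_univ, ← Iic_union_Ioi (a := (0:ℝ))]
  exact (int_Iic r).union (int_Ioi r)

lemma key (r : ℝ) : ∫ t : ℝ, Complex.exp ((r*t : ℝ) * I) * f t = ((r:ℂ)^2 + 1/4)⁻¹ := by
  rw [← intervalIntegral.integral_Iic_add_Ioi (int_Iic r) (int_Ioi r),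
    setIntegral_congr_fun measurableSet_Iic (eq_Iic r),
    setIntegral_congr_fun measurableSet_Ioi (eq_Ioi r),
    integral_cexp_Iic (by simp), integral_cexp_Ioi (by norm_num)]
  have h1 : (1/2 + (r:ℂ) * I) ≠ 0 := by
    intro h; have := congrArg Complex.re h; simp at this
  have h4 : ((1:ℂ)/2 - r*I) ≠ 0 := by
    intro h; have := congrArg Complex.re h; simp at this
  rw [show (-(1/2) + (r:ℂ)*I) = -(1/2 - r*I) by ring, inv_neg, neg_neg,
    inv_add_inv h1 h4,
    show (1/2 + (r:ℂ)*I) * (1/2 - r*I) = (r:ℂ)^2 + 1/4 by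
      ring_nf; rw [Complex.I_sq]; ring,
    show (1/2 + (r:ℂ)*I) + (1/2 - r*I) = 1 by ring, one_div]

lemma fourier_f (w : ℝ) : 𝓕 f w = (((2 * π * w : ℝ) : ℂ)^2 + 1/4)⁻¹ := by
  rw [Real.fourier_eq']
  have : ∀ v : ℝ, Complex.exp ((((-2 * π * (inner ℝ v w : ℝ) : ℝ)) : ℂ) * I) • f v
      = Complex.exp (((-2 * π * w) * v : ℝ) * I) * f v := by
    intro v
    simp only [RCLike.inner_apply, conj_trivial, smul_eq_mul]
    norm_num
    ring_nf
    simp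
  simp_rw [this]
  rw [key (-2 * π * w)]
  congr 1
  push_cast
  ring

lemma integrable_fourier_f : Integrable (𝓕 f) := by
  have h : Integrable (fun w : ℝ => ((2 * π * w)^2 + 1/4)⁻¹) := by
    have h2 : Integrable (fun w : ℝ => 4 * (1 + (4 * π * w)^2)⁻¹) := by
      have := (integrable_inv_one_add_sq.comp_mul_left' (R := 4 * π)
        (by positivity)).const_mul 4
      simpa [mul_pow] using this
    refine h2.congr (Eventually.of_forall fun w => ?_)
    have hd : (0:ℝ) < 1 + (4 * π * w)^2 := by positivity
    field_simp
    ring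
  have heq : (𝓕 f) = fun w : ℝ => ((((2 * π * w)^2 + 1/4)⁻¹ : ℝ) : ℂ) := by
    ext w
    rw [fourier_f w]
    push_cast
    norm_num
  rw [heq]
  exact h.ofReal

lemma integrable_f : Integrable f := by
  have := int_f 0
  simpa using this

lemma cont_f : Continuous f :=
  Complex.continuous_ofReal.comp (Real.continuous_exp.comp ((_root_.continuous_abs.neg).div_const 2))

lemma inv_eq (k : ℝ) :
    ∫ u : ℝ, Complex.exp ((u * k : ℝ) * I) * (((u:ℂ))^2 + 1/4)⁻¹
      = (2 * π * Real.exp (-|k|/2) : ℝ) := by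
  have h2 : 𝓕⁻ (𝓕 f) k = f k :=
    congrFun (cont_f.fourierInv_fourier_eq integrable_f integrable_fourier_f) k
  rw [Real.fourierInv_eq'] at h2
  set g : ℝ → ℂ := fun u => Complex.exp ((u * k : ℝ) * I) * (((u:ℂ))^2 + 1/4)⁻¹ with hg
  have h3 : ∀ v : ℝ, Complex.exp ((((2 * π * (inner ℝ v k : ℝ) : ℝ)) : ℂ) * I) • 𝓕 f v
      = g (2 * π * v) := by
    intro v
    rw [fourier_f v, hg]
    simp only [RCLike.inner_apply, conj_trivial, smul_eq_mul]
    norm_num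
    left
    congr 2
    ring
  rw [show (∫ v : ℝ, Complex.exp ((((2 * π * (inner ℝ v k : ℝ) : ℝ)) : ℂ) * I) • 𝓕 f v)
      = ∫ v : ℝ, g (2 * π * v) from integral_congr_ae (Eventually.of_forall h3)] at h2
  rw [Measure.integral_comp_mul_left g (2 * π)] at h2
  have hpos : |(2 * π)⁻¹| = (2 * π)⁻¹ := abs_of_pos (by positivity)
  rw [hpos] at h2
  have : (∫ u : ℝ, g u) = (2 * π) • ((f k)) := by
    rw [← h2, smul_smul]
    rw [mul_inv_cancel₀ (by positivity)]
    simp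
  rw [hg] at this
  rw [this]
  simp only [f]
  rw [Complex.real_smul]
  push_cast
  ring

end LewisLipton

open LewisLipton in
/-- The `v = 0` limit of the Lewis-Lipton Black-Scholes integral:
`(1/(2π)) ∫ e^{-k(iu - 1/2)}/(u² + 1/4) du = e^{min(k,0)}`. -/
theorem lewis_lipton_v_zero (k : ℝ) :
    (1 / (2 * Real.pi) : ℂ) *
        ∫ u : ℝ, Complex.exp (-(k : ℂ) * (Complex.I * (u : ℂ) - 1 / 2)) /
          ((u : ℂ) ^ 2 + 1 / 4) =
      ((Real.exp (min k 0) : ℝ) : ℂ) := by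
  have h1 : ∀ u : ℝ, Complex.exp (-(k : ℂ) * (Complex.I * (u : ℂ) - 1 / 2)) /
      ((u : ℂ) ^ 2 + 1 / 4)
      = Complex.exp ((k:ℂ)/2) * (Complex.exp ((u * (-k) : ℝ) * I) * (((u:ℂ))^2 + 1/4)⁻¹) := by
    intro u
    rw [div_eq_mul_inv, ← mul_assoc, ← Complex.exp_add]
    congr 2
    push_cast
    ring
  rw [integral_congr_ae (Eventually.of_forall h1), integral_const_mul, inv_eq (-k)]
  have hmin : min k 0 = (k - |k|) / 2 := by
    rcases le_total k 0 with h | h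
    · rw [min_eq_left h, abs_of_nonpos h]; ring
    · rw [min_eq_right h, _root_.abs_of_nonneg h]; ring
  rw [hmin, abs_neg]
  have hπ : (π : ℂ) ≠ 0 := Complex.ofReal_ne_zero.mpr Real.pi_ne_zero
  rw [show ((Real.exp ((k - |k|)/2) : ℝ) : ℂ) = Complex.exp (((k - |k|)/2 : ℝ) : ℂ)
    from Complex.ofReal_exp _]
  push_cast
  rw [show ((k:ℂ) - |k|)/2 = (k:ℂ)/2 + (-|k|/2) by ring, Complex.exp_add]
  field_simp
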